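/- arXiv:1207.4659 — 2 statements merged into one kernel-verified Lean document; each statement's English description precedes it below -/
import Mathlib

section
/- The Lebesgue measure restricted to the unit interval [0,1] (i.e., the measure with constant density ρ⁽⁰⁾(x) = 1 on [0,1]) is invariant under the map φ₀; that is, the pushforward of this measure under φ₀ equals the measure itself. -/
open MeasureTheory
open scoped ENNReal

/-- The infinitely piecewise linear map `φ_k` on `[0,1]`:
`φ_k(x) = 2^(1-k) (x - 1/2)` for `x ∈ [1/2, 1]`,
`φ_k(x) = 2^i (x - 2^(-i))` for `x ∈ [2^(-i), 2^(1-i))`, `i ≥ 2`, and `φ_k(0) = 0`.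
For `0 < x < 1/2`, the index `i` is recovered as `i = -(Int.log 2 x)`. -/
noncomputable def phi (k : ℕ) (x : ℝ) : ℝ :=
  if x = 0 then 0
  else if (1 : ℝ) / 2 ≤ x then (2 : ℝ) ^ ((1 : ℤ) - k) * (x - 1 / 2)
  else (2 : ℝ) ^ (-(Int.log 2 x)) * (x - (2 : ℝ) ^ (Int.log 2 x))

lemma log_eq_aux (n : ℕ) {x : ℝ} (h1 : (2:ℝ) ^ (-(n+1:ℤ)) < x) (h2 : x < (2:ℝ) ^ (-(n:ℤ))) :
    Int.log 2 x = -(n+1) := by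
  have hx : (0:ℝ) < x := lt_trans (by positivity) h1
  have hb : 1 < 2 := one_lt_two
  have hle : -(n+1:ℤ) ≤ Int.log 2 x := by
    have h0 := Int.log_mono_right (b := 2) (by positivity : (0:ℝ) < (2:ℝ) ^ (-(n+1:ℤ))) h1.le
    have hz : Int.log 2 ((2:ℝ) ^ (-(n+1:ℤ))) = -(n+1:ℤ) := by
      simpa using Int.log_zpow (R := ℝ) one_lt_two (-(n+1:ℤ))
    rwa [hz] at h0
  have hlt : Int.log 2 x < -(n:ℤ) := by
    by_contra h
    push_neg at h
    have : (2:ℝ) ^ (-(n:ℤ)) ≤ (2:ℝ) ^ (Int.log 2 x) := by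
      exact zpow_le_zpow_right₀ one_le_two h
    exact absurd (this.trans (Int.zpow_log_le_self hb hx)) (not_le.mpr h2)
  omega

lemma phi_eq (n : ℕ) {x : ℝ} (hx : x ∈ Set.Ioo ((2:ℝ) ^ (-(n+1:ℤ))) ((2:ℝ) ^ (-(n:ℤ)))) :
    phi 0 x = 2 ^ (n+1) * x - 1 := by
  obtain ⟨h1, h2⟩ := hx
  have hx0 : (0:ℝ) < x := lt_trans (by positivity) h1
  rw [phi, if_neg hx0.ne']
  rcases Nat.eq_zero_or_pos n with rfl | hn
  · rw [if_pos]
    · norm_num; ring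
    · have : ((2:ℝ)) ^ (-(0+1:ℤ)) = 1/2 := by norm_num
      linarith [this ▸ h1]
  · rw [if_neg, log_eq_aux n h1 h2]
    · have : ((2:ℝ)) ^ (-(-(n+1:ℤ))) = 2 ^ (n+1) := by
        rw [neg_neg]; norm_cast
      rw [this]
      have h2n : ((2:ℝ)) ^ (n+1) * (2:ℝ) ^ (-(n+1:ℤ)) = 1 := by
        rw [← zpow_natCast (2:ℝ) (n+1), ← zpow_add₀ (two_ne_zero)]
        push_cast
        ring_nf
        simp
      ring_nf
      ring_nf at h2n
      nlinarith [h2n]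
    · push_neg
      calc x < (2:ℝ) ^ (-(n:ℤ)) := h2
        _ ≤ (2:ℝ) ^ (-(1:ℤ)) := zpow_le_zpow_right₀ one_le_two (by omega)
        _ = 1/2 := by norm_num

lemma two_pow_mul (n : ℕ) (z : ℤ) : (2:ℝ) ^ (n+1) * (2:ℝ) ^ z = (2:ℝ) ^ ((n:ℤ) + 1 + z) := by
  rw [← zpow_natCast (2:ℝ) (n+1), ← zpow_add₀ (two_ne_zero)]
  push_cast
  ring_nf


/-- The Lebesgue measure restricted to `[0,1]` (constant density `ρ⁰(x) = 1` on `[0,1]`)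
is invariant under `φ₀`. -/
theorem stmt_0 :
    Measure.map (phi 0) (volume.restrict (Set.Icc (0 : ℝ) 1)) =
      volume.restrict (Set.Icc (0 : ℝ) 1) := by
  set S : ℕ → Set ℝ := fun n => Set.Ioo ((2:ℝ) ^ (-(n+1:ℤ))) ((2:ℝ) ^ (-(n:ℤ))) with hS
  have hmeas : ∀ n, MeasurableSet (S n) := fun n => measurableSet_Ioo
  have hdisj : Pairwise (Function.onFun Disjoint S) := by
    intro m n hmn
    wlog h : m < n generalizing m n
    · exact (this hmn.symm (by omega)).symm
    refine Set.disjoint_left.mpr ?_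
    rintro x ⟨hm1, _⟩ ⟨_, hn2⟩
    have : (2:ℝ) ^ (-(n:ℤ)) ≤ (2:ℝ) ^ (-(m+1:ℤ)) :=
      zpow_le_zpow_right₀ one_le_two (by omega)
    linarith
  have hsub : (⋃ n, S n) ⊆ Set.Icc (0:ℝ) 1 := by
    refine Set.iUnion_subset fun n x hx => ?_
    obtain ⟨h1, h2⟩ := hx
    have h0 : (0:ℝ) < (2:ℝ) ^ (-(n+1:ℤ)) := by positivity
    have h1' : (2:ℝ) ^ (-(n:ℤ)) ≤ 1 := by
      have := zpow_le_zpow_right₀ (one_le_two (α := ℝ)) (by omega : -(n:ℤ) ≤ 0)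
      simpa using this
    exact ⟨by linarith, by linarith⟩
  have hae : Set.Icc (0:ℝ) 1 =ᵐ[volume] ⋃ n, S n := by
    rw [MeasureTheory.ae_eq_set]
    constructor
    · refine measure_mono_null (?_ : _ ⊆ {0} ∪ Set.range (fun n : ℕ => (2:ℝ) ^ (-(n:ℤ)))) ?_
      · rintro x ⟨⟨hx0, hx1⟩, hxU⟩
        rcases eq_or_lt_of_le hx0 with h|hx0'
        · left; simp [← h]
        right
        by_contra hxr
        simp only [Set.mem_range, not_exists] at hxr
        exfalso
        have hl1 : (2:ℝ) ^ (Int.log 2 x) ≤ x := by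
          have := Int.zpow_log_le_self (R := ℝ) one_lt_two hx0'
          simpa using this
        have hl2 : x < (2:ℝ) ^ (Int.log 2 x + 1) := by
          have := Int.lt_zpow_succ_log_self (R := ℝ) (b := 2) one_lt_two x
          simpa using this
        have hx1' : x < 1 := lt_of_le_of_ne hx1 (by
          intro h; exact hxr 0 (by simpa using h.symm))
        have hlneg : Int.log 2 x < 0 := by
          by_contra hl
          push_neg at hl
          have : (1:ℝ) ≤ (2:ℝ) ^ (Int.log 2 x) := one_le_zpow₀ one_le_two hl
          linarith
        obtain ⟨m, hmz⟩ : ∃ m : ℕ, -(m+1:ℤ) = Int.log 2 x :=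
          ⟨(-(Int.log 2 x) - 1).toNat, by omega⟩
        have hmz2 : -(m:ℤ) = Int.log 2 x + 1 := by rw [← hmz]; ring
        have hl1' : (2:ℝ) ^ (Int.log 2 x) < x := lt_of_le_of_ne hl1 (by
          intro h
          have he : -(((-(Int.log 2 x)).toNat : ℤ)) = Int.log 2 x := by omega
          exact hxr (-(Int.log 2 x)).toNat (by rw [he, h]))
        exact hxU (Set.mem_iUnion.mpr ⟨m, by rw [hS]; exact ⟨by rw [hmz]; exact hl1', by rw [hmz2]; exact hl2⟩⟩)
      · exact Set.Countable.measure_zero ((Set.countable_singleton 0).union (Set.countable_range _)) _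
    · rw [Set.diff_eq_empty.mpr hsub]
      simp
  conv_lhs => rw [Measure.restrict_congr_set hae, Measure.restrict_iUnion hdisj hmeas]
  have haem : ∀ n, (phi 0) =ᵐ[volume.restrict (S n)] (fun x => 2^(n+1) * x - 1) := fun n =>
    (ae_restrict_iff' (hmeas n)).mpr (ae_of_all _ (fun x hx => phi_eq n hx))
  have hgm : ∀ n : ℕ, Measurable (fun x : ℝ => 2^(n+1) * x - 1) := fun n =>
    (measurable_const_mul _).sub measurable_const
  have haemble : AEMeasurable (phi 0) (Measure.sum fun n => volume.restrict (S n)) := by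
    rw [aemeasurable_sum_measure_iff]
    exact fun n => ((hgm n).aemeasurable).congr (haem n).symm
  rw [Measure.map_sum haemble]
  have hmapn : ∀ n : ℕ, Measure.map (phi 0) (volume.restrict (S n)) =
      ((2:ℝ≥0∞)^(n+1))⁻¹ • volume.restrict (Set.Ioo (0:ℝ) 1) := by
    intro n
    rw [Measure.map_congr (haem n)]
    have hp : (0:ℝ) < 2 ^ (n+1) := by positivity
    have hpre : S n = (fun x : ℝ => 2^(n+1) * x - 1) ⁻¹' Set.Ioo 0 1 := by
      ext x
      simp only [hS, Set.mem_Ioo, Set.mem_preimage]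
      have e1 : (2:ℝ) ^ (n+1) * (2:ℝ) ^ (-(n+1:ℤ)) = 1 := by
        rw [two_pow_mul, show (n:ℤ) + 1 + -(n+1:ℤ) = 0 by ring, zpow_zero]
      have e2 : (2:ℝ) ^ (n+1) * (2:ℝ) ^ (-(n:ℤ)) = 2 := by
        rw [two_pow_mul, show (n:ℤ) + 1 + -(n:ℤ) = 1 by ring, zpow_one]
      constructor
      · rintro ⟨h1, h2⟩
        constructor
        · nlinarith [mul_lt_mul_of_pos_left h1 hp]
        · nlinarith [mul_lt_mul_of_pos_left h2 hp]
      · rintro ⟨h1, h2⟩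
        constructor
        · nlinarith
        · nlinarith
    rw [hpre, ← Measure.restrict_map (hgm n) measurableSet_Ioo]
    have hcomp : (fun x : ℝ => 2^(n+1) * x - 1) =
        (fun y : ℝ => y + (-1)) ∘ (fun x : ℝ => (2:ℝ)^(n+1) * x) := by
      funext x; simp [sub_eq_add_neg]
    rw [hcomp, ← Measure.map_map (measurable_add_const (-1)) (measurable_const_mul _),
      Real.map_volume_mul_left (ne_of_gt hp), Measure.map_smul, map_add_right_eq_self]
    rw [abs_of_pos (by positivity), ENNReal.ofReal_inv_of_pos hp,
      ENNReal.ofReal_pow (by norm_num : (0:ℝ) ≤ 2), ENNReal.ofReal_ofNat,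
      Measure.restrict_smul]
  simp_rw [hmapn]
  have hsum : Measure.sum (fun n : ℕ => ((2:ℝ≥0∞)^(n+1))⁻¹ • volume.restrict (Set.Ioo (0:ℝ) 1)) =
      volume.restrict (Set.Ioo (0:ℝ) 1) := by
    ext s hs
    rw [Measure.sum_apply _ hs]
    simp only [Measure.smul_apply, smul_eq_mul]
    rw [ENNReal.tsum_mul_right]
    have key : ∑' n : ℕ, ((2:ℝ≥0∞)^(n+1))⁻¹ = 1 := by
      have h1 : ∀ n : ℕ, ((2:ℝ≥0∞)^(n+1))⁻¹ = (2:ℝ≥0∞)⁻¹ * (2⁻¹)^n := by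
        intro n
        rw [pow_succ', ENNReal.mul_inv (by simp) (by simp), ← ENNReal.inv_pow]
      simp_rw [h1]
      rw [ENNReal.tsum_mul_left, ENNReal.tsum_geometric]
      rw [ENNReal.one_sub_inv_two]
      rw [inv_inv]
      exact ENNReal.inv_mul_cancel (by norm_num) (by norm_num)
    rw [key, one_mul]
  rw [hsum]
  exact Measure.restrict_congr_set Ioo_ae_eq_Icc
end

section
/- (Proposition 1) The measure on [0,1] with density ρ⁽¹⁾ with respect to Lebesgue measure, where ρ⁽¹⁾(x) = 4/3 for x ∈ [0, 1/2) and ρ⁽¹⁾(x) = 2/3 for x ∈ [1/2, 1], is an invariant probability measure for the map φ₁; that is, the pushforward of this measure under φ₁ equals the measure itself. -/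
open MeasureTheory Set

/-- The density `ρ¹`: `4/3` on `[0, 1/2)` and `2/3` on `[1/2, 1]`. -/
noncomputable def rho1 (x : ℝ) : ENNReal :=
  if x < 1 / 2 then ENNReal.ofReal (4 / 3) else ENNReal.ofReal (2 / 3)

/-- The measure on `[0,1]` with density `ρ¹` with respect to Lebesgue measure. -/
noncomputable def mu1 : Measure ℝ :=
  (volume.restrict (Set.Icc (0 : ℝ) 1)).withDensity rho1

lemma two_cast : ((2:ℕ):ℝ) = 2 := by norm_num

lemma log_eq_iff' {x : ℝ} (hx : 0 < x) (n : ℤ) :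
    Int.log 2 x = n ↔ (2:ℝ)^n ≤ x ∧ x < (2:ℝ)^(n+1) := by
  constructor
  · rintro rfl
    refine ⟨?_, ?_⟩
    · have := Int.zpow_log_le_self (R := ℝ) (b := 2) one_lt_two hx
      rwa [two_cast] at this
    · have := Int.lt_zpow_succ_log_self (R := ℝ) (b := 2) one_lt_two x
      rwa [two_cast] at this
  · rintro ⟨h1, h2⟩
    have a1 := (Int.zpow_le_iff_le_log (R := ℝ) (b := 2) one_lt_two (x := n) hx).mp (by rwa [two_cast])
    have a2 := (Int.lt_zpow_iff_log_lt (R := ℝ) (b := 2) one_lt_two (x := n+1) hx).mp (by rwa [two_cast])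
    omega

lemma measurable_log2 : Measurable fun x : ℝ => Int.log 2 x := by
  apply measurable_to_countable
  intro y
  set n := Int.log 2 y with hn
  have : (fun x : ℝ => Int.log 2 x) ⁻¹' {n}
      = Ico ((2:ℝ)^n) ((2:ℝ)^(n+1)) ∪ (if n = 0 then Iic (0:ℝ) else ∅) := by
    ext x
    simp only [mem_preimage, mem_singleton_iff, mem_union, mem_Ico]
    rcases le_or_gt x 0 with hx | hx
    · have hlog : Int.log 2 x = 0 := Int.log_of_right_le_zero _ hx
      have h2n : (0:ℝ) < 2^n := zpow_pos (by norm_num) n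
      constructor
      · intro h; right; rw [← h, hlog, if_pos rfl]; exact hx
      · rintro (⟨h1, _⟩ | h)
        · linarith
        · split_ifs at h with h0
          · rw [hlog, h0]
          · exact absurd h (notMem_empty x)
    · rw [log_eq_iff' hx n]
      constructor
      · exact fun h => Or.inl h
      · rintro (h | h)
        · exact h
        · split_ifs at h with h0
          · have : x ≤ 0 := by simpa using h
            linarith
          · exact absurd h (notMem_empty x)
  rw [this]
  apply MeasurableSet.union measurableSet_Ico
  split_ifs <;> simp

lemma measurable_zpow2 : Measurable fun m : ℤ => (2:ℝ)^m := measurable_from_top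

lemma measurable_phi1 : Measurable (phi 1) := by
  unfold phi
  refine Measurable.ite (measurableSet_eq) measurable_const
    (Measurable.ite (measurableSet_le measurable_const measurable_id)
      (measurable_const.mul (measurable_id.sub measurable_const)) ?_)
  exact (measurable_zpow2.comp measurable_log2.neg).mul
    (measurable_id.sub (measurable_zpow2.comp measurable_log2))

lemma mu1_apply {s : Set ℝ} (hs : MeasurableSet s) :
    mu1 s = ENNReal.ofReal (4/3) * volume (s ∩ Ico (0:ℝ) (1/2))
      + ENNReal.ofReal (2/3) * volume (s ∩ Icc (1/2:ℝ) 1) := by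
  rw [mu1, withDensity_apply _ hs, Measure.restrict_restrict hs]
  have hsplit : s ∩ Icc (0:ℝ) 1 = (s ∩ Ico (0:ℝ) (1/2)) ∪ (s ∩ Icc (1/2:ℝ) 1) := by
    ext x
    simp only [mem_inter_iff, mem_Icc, mem_Ico, mem_union]
    constructor
    · rintro ⟨hx, h0, h1⟩
      rcases lt_or_ge x (1/2) with h | h
      · exact Or.inl ⟨hx, h0, h⟩
      · exact Or.inr ⟨hx, h, h1⟩
    · rintro (⟨hx, h0, h⟩ | ⟨hx, h, h1⟩)
      · exact ⟨hx, h0, by linarith⟩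
      · exact ⟨hx, by linarith, h1⟩
  have hdisj : Disjoint (s ∩ Ico (0:ℝ) (1/2)) (s ∩ Icc (1/2:ℝ) 1) := by
    rw [Set.disjoint_left]
    rintro x ⟨_, _, h1⟩ ⟨_, h2, _⟩
    linarith
  rw [hsplit, lintegral_union (hs.inter measurableSet_Icc) hdisj]
  congr 1
  · rw [setLIntegral_congr_fun (hs.inter measurableSet_Ico)
      (fun x hx => ?_), setLIntegral_const]
    rw [rho1, if_pos hx.2.2]
  · rw [setLIntegral_congr_fun (hs.inter measurableSet_Icc)
      (fun x hx => ?_), setLIntegral_const]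
    rw [rho1, if_neg (not_lt.mpr hx.2.1)]

lemma mu1_prob : IsProbabilityMeasure mu1 := by
  constructor
  rw [mu1_apply MeasurableSet.univ]
  simp only [Set.univ_inter, Real.volume_Ico, Real.volume_Icc]
  rw [← ENNReal.ofReal_mul (by norm_num), ← ENNReal.ofReal_mul (by norm_num),
    ← ENNReal.ofReal_add (by norm_num) (by norm_num)]
  norm_num

lemma phi1_half {x : ℝ} (hx : (1:ℝ)/2 ≤ x) : phi 1 x = x - 1/2 := by
  have h0 : x ≠ 0 := by intro h; rw [h] at hx; linarith
  rw [phi, if_neg h0, if_pos hx]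
  norm_num

lemma phi1_small {x : ℝ} (h0 : 0 < x) (h : x < 1/2) :
    phi 1 x = (2:ℝ)^(-(Int.log 2 x)) * (x - (2:ℝ)^(Int.log 2 x)) := by
  rw [phi, if_neg h0.ne', if_neg (not_le.mpr h)]

lemma zpow_log_le {x : ℝ} (hx : 0 < x) : (2:ℝ)^(Int.log 2 x) ≤ x := by
  have := Int.zpow_log_le_self (R := ℝ) (b := 2) one_lt_two hx
  rwa [two_cast] at this

lemma lt_zpow_succ (x : ℝ) : x < (2:ℝ)^(Int.log 2 x + 1) := by
  have := Int.lt_zpow_succ_log_self (R := ℝ) (b := 2) one_lt_two x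
  rwa [two_cast] at this

lemma zpow_neg_mul {L : ℤ} : (2:ℝ)^(-L) * (2:ℝ)^L = 1 := by
  rw [← zpow_add₀ (two_ne_zero)]
  simp

lemma phi1_nonneg {x : ℝ} (hx : 0 ≤ x) : 0 ≤ phi 1 x := by
  rcases eq_or_lt_of_le hx with h | h
  · rw [phi, if_pos h.symm]
  rcases le_or_gt (1/2 : ℝ) x with h2 | h2
  · rw [phi1_half h2]; linarith
  · rw [phi1_small h h2]
    have h1 := zpow_log_le h
    have h3 : (0:ℝ) < 2^(-(Int.log 2 x)) := zpow_pos (by norm_num) _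
    nlinarith

lemma phi1_le_one {x : ℝ} (hx0 : 0 ≤ x) (hx1 : x ≤ 1) : phi 1 x ≤ 1 := by
  rcases eq_or_lt_of_le hx0 with h | h
  · rw [phi, if_pos h.symm]; norm_num
  rcases le_or_gt (1/2 : ℝ) x with h2 | h2
  · rw [phi1_half h2]; linarith
  · rw [phi1_small h h2]
    set L := Int.log 2 x with hL
    have h1 : x < 2 * (2:ℝ)^L := by
      have := lt_zpow_succ x
      rwa [zpow_add_one₀ (two_ne_zero), mul_comm] at this
    have h3 : (0:ℝ) < 2^(-L) := zpow_pos (by norm_num) _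
    have key : (2:ℝ)^(-L) * (2:ℝ)^L = 1 := zpow_neg_mul
    nlinarith [mul_lt_mul_of_pos_left h1 h3]

lemma preimage_right (a : ℝ) :
    phi 1 ⁻¹' (Iic a) ∩ Icc (1/2:ℝ) 1 = Icc (1/2:ℝ) (min (a + 1/2) 1) := by
  ext x
  simp only [mem_inter_iff, mem_preimage, mem_Iic, mem_Icc, le_min_iff]
  constructor
  · rintro ⟨hphi, h1, h2⟩
    rw [phi1_half h1] at hphi
    exact ⟨h1, by linarith, h2⟩
  · rintro ⟨h1, h2, h3⟩
    refine ⟨?_, h1, h3⟩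
    rw [phi1_half h1]; linarith

lemma preimage_left (a : ℝ) (ha0 : 0 ≤ a) (ha1 : a < 1) :
    phi 1 ⁻¹' (Iic a) ∩ Ico (0:ℝ) (1/2)
      = {0} ∪ ⋃ n : ℕ, Icc ((2:ℝ)^(-(n:ℤ)-2)) ((1+a) * (2:ℝ)^(-(n:ℤ)-2)) := by
  ext x
  simp only [mem_inter_iff, mem_preimage, mem_Iic, mem_Ico, mem_union,
    mem_singleton_iff, mem_iUnion, mem_Icc]
  constructor
  · rintro ⟨hphi, hx0, hx2⟩
    rcases eq_or_lt_of_le hx0 with h | h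
    · exact Or.inl h.symm
    right
    set L := Int.log 2 x with hL
    have hlo := zpow_log_le h
    have hhalf : (2:ℝ)^(-1:ℤ) = 1/2 := by norm_num
    have hL2 : L ≤ -2 := by
      have := (Int.lt_zpow_iff_log_lt (R := ℝ) (b := 2) one_lt_two (x := -1) h).mp
        (by rw [two_cast, hhalf]; exact hx2)
      omega
    refine ⟨(-L-2).toNat, ?_⟩
    have hn : -(((-L-2).toNat : ℤ)) - 2 = L := by
      rw [Int.toNat_of_nonneg (by omega)]; ring
    rw [hn]
    refine ⟨hlo, ?_⟩
    rw [phi1_small h hx2, ← hL] at hphi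
    have h3 : (0:ℝ) < 2^L := zpow_pos (by norm_num) _
    have key : (2:ℝ)^(-L) * (2:ℝ)^L = 1 := zpow_neg_mul
    have h4 : x - (2:ℝ)^L ≤ (2:ℝ)^L * a := by
      have := mul_le_mul_of_nonneg_left hphi h3.le
      rwa [← mul_assoc, mul_comm ((2:ℝ)^L), key, one_mul] at this
    nlinarith [h4]
  · rintro (rfl | ⟨n, h1, h2⟩)
    · exact ⟨by rw [phi, if_pos rfl]; exact ha0, le_refl 0, by norm_num⟩
    · set c : ℝ := (2:ℝ)^(-(n:ℤ)-2) with hc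
      have hcpos : (0:ℝ) < c := zpow_pos (by norm_num) _
      have hxpos : 0 < x := lt_of_lt_of_le hcpos h1
      have hub : x < 2 * c := by nlinarith
      have h2c : 2 * c = (2:ℝ)^(-(n:ℤ)-1) := by
        rw [hc, show (-(n:ℤ)-1) = (-(n:ℤ)-2)+1 by ring,
          zpow_add_one₀ (by norm_num : (2:ℝ) ≠ 0)]
        ring
      have hlog : Int.log 2 x = -(n:ℤ)-2 := by
        rw [log_eq_iff' hxpos]
        exact ⟨h1, by rw [show (-(n:ℤ)-2)+1 = -(n:ℤ)-1 by ring, ← h2c]; exact hub⟩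
      have hhalf : x < 1/2 := by
        have hm : (2:ℝ)^(-(n:ℤ)-1) ≤ (2:ℝ)^(-1:ℤ) :=
          zpow_le_zpow_right₀ one_le_two (by omega)
        have e : (2:ℝ)^(-1:ℤ) = 1/2 := by norm_num
        rw [h2c] at hub
        rw [e] at hm
        linarith
      refine ⟨?_, hxpos.le, hhalf⟩
      rw [phi1_small hxpos hhalf, hlog]
      have key : (2:ℝ)^(-(-(n:ℤ)-2)) * c = 1 := zpow_neg_mul
      have hpos2 : (0:ℝ) < 2^(-(-(n:ℤ)-2)) := zpow_pos (by norm_num) _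
      calc (2:ℝ)^(-(-(n:ℤ)-2)) * (x - c)
          ≤ (2:ℝ)^(-(-(n:ℤ)-2)) * (a * c) :=
            mul_le_mul_of_nonneg_left (by nlinarith) hpos2.le
        _ = a := by rw [mul_comm a c, ← mul_assoc, key, one_mul]

lemma volume_left (a : ℝ) (ha0 : 0 ≤ a) (ha1 : a < 1) :
    volume ({(0:ℝ)} ∪ ⋃ n : ℕ, Icc ((2:ℝ)^(-(n:ℤ)-2)) ((1+a) * (2:ℝ)^(-(n:ℤ)-2)))
      = ENNReal.ofReal (a/2) := by
  have h0 : volume ({(0:ℝ)} ∪ ⋃ n : ℕ, Icc ((2:ℝ)^(-(n:ℤ)-2)) ((1+a) * (2:ℝ)^(-(n:ℤ)-2)))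
      = volume (⋃ n : ℕ, Icc ((2:ℝ)^(-(n:ℤ)-2)) ((1+a) * (2:ℝ)^(-(n:ℤ)-2))) := by
    apply le_antisymm
    · refine (measure_union_le _ _).trans ?_; simp
    · exact measure_mono subset_union_right
  rw [h0]
  have hd : Pairwise (Function.onFun Disjoint
      fun n : ℕ => Icc ((2:ℝ)^(-(n:ℤ)-2)) ((1+a) * (2:ℝ)^(-(n:ℤ)-2))) := by
    have key : ∀ m n : ℕ, m < n →
        Disjoint (Icc ((2:ℝ)^(-(m:ℤ)-2)) ((1+a) * (2:ℝ)^(-(m:ℤ)-2)))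
          (Icc ((2:ℝ)^(-(n:ℤ)-2)) ((1+a) * (2:ℝ)^(-(n:ℤ)-2))) := by
      intro m n hmn
      apply Set.disjoint_left.mpr
      rintro x ⟨hx1, _⟩ ⟨_, hy2⟩
      have hcn : (0:ℝ) < 2^(-(n:ℤ)-2) := zpow_pos (by norm_num) _
      have h2c : 2 * (2:ℝ)^(-(n:ℤ)-2) = (2:ℝ)^(-(n:ℤ)-1) := by
        rw [show (-(n:ℤ)-1) = (-(n:ℤ)-2)+1 by ring,
          zpow_add_one₀ (by norm_num : (2:ℝ) ≠ 0)]
        ring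
      have h1 : (1+a) * (2:ℝ)^(-(n:ℤ)-2) < (2:ℝ)^(-(n:ℤ)-1) := by
        rw [← h2c]; nlinarith
      have h2 : (2:ℝ)^(-(n:ℤ)-1) ≤ (2:ℝ)^(-(m:ℤ)-2) :=
        zpow_le_zpow_right₀ one_le_two (by omega)
      linarith
    intro m n hmn
    rcases hmn.lt_or_gt with h | h
    · exact key m n h
    · exact (key n m h).symm
  rw [measure_iUnion hd (fun n => measurableSet_Icc)]
  have hvol : ∀ n : ℕ, volume (Icc ((2:ℝ)^(-(n:ℤ)-2)) ((1+a) * (2:ℝ)^(-(n:ℤ)-2)))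
      = ENNReal.ofReal ((a/4) * (1/2)^n) := by
    intro n
    rw [Real.volume_Icc]
    congr 1
    have e1 : (2:ℝ)^(-(n:ℤ)-2) = ((2:ℝ)⁻¹)^(n+2) := by
      rw [inv_pow, ← zpow_natCast (2:ℝ) (n+2), ← zpow_neg]
      congr 1; push_cast; ring
    rw [e1, pow_add]
    norm_num
    ring
  rw [tsum_congr hvol,
    ← ENNReal.ofReal_tsum_of_nonneg (fun n => by positivity)
      ((summable_geometric_of_lt_one (by norm_num) (by norm_num)).mul_left _),
    tsum_mul_left, tsum_geometric_of_lt_one (by norm_num) (by norm_num)]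
  norm_num
  congr 1
  ring

lemma map_Iic (a : ℝ) : mu1 (phi 1 ⁻¹' Iic a) = mu1 (Iic a) := by
  rw [mu1_apply (measurable_phi1 measurableSet_Iic), mu1_apply measurableSet_Iic]
  rcases lt_or_ge a 0 with ha | ha
  · have e1 : phi 1 ⁻¹' Iic a ∩ Ico (0:ℝ) (1/2) = ∅ := by
      apply eq_empty_iff_forall_notMem.mpr
      rintro x ⟨hx1, hx2⟩
      have := phi1_nonneg hx2.1
      have : phi 1 x ≤ a := hx1
      linarith
    have e2 : phi 1 ⁻¹' Iic a ∩ Icc (1/2:ℝ) 1 = ∅ := by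
      apply eq_empty_iff_forall_notMem.mpr
      rintro x ⟨hx1, hx2⟩
      have := phi1_nonneg (le_trans (by norm_num) hx2.1)
      have : phi 1 x ≤ a := hx1
      linarith
    have e3 : Iic a ∩ Ico (0:ℝ) (1/2) = ∅ := by
      apply eq_empty_iff_forall_notMem.mpr
      rintro x ⟨hx1, hx2⟩
      have : x ≤ a := hx1
      linarith [hx2.1]
    have e4 : Iic a ∩ Icc (1/2:ℝ) 1 = ∅ := by
      apply eq_empty_iff_forall_notMem.mpr
      rintro x ⟨hx1, hx2⟩
      have : x ≤ a := hx1
      linarith [hx2.1]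
    rw [e1, e2, e3, e4]
  rcases lt_or_ge a 1 with ha1 | ha1
  · rw [preimage_right a, preimage_left a ha ha1, volume_left a ha ha1]
    rcases lt_or_ge a (1/2) with h2 | h2
    · have eA : min (a+1/2) 1 = a + 1/2 := min_eq_left (by linarith)
      have eB : Iic a ∩ Ico (0:ℝ) (1/2) = Icc 0 a := by
        ext x
        simp only [mem_inter_iff, mem_Iic, mem_Ico, mem_Icc]
        constructor
        · rintro ⟨h, h0, _⟩; exact ⟨h0, h⟩
        · rintro ⟨h0, h⟩; exact ⟨h, h0, by linarith⟩
      have eC : Iic a ∩ Icc (1/2:ℝ) 1 = ∅ := by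
        apply eq_empty_iff_forall_notMem.mpr
        rintro x ⟨hx1, hx2⟩
        have : x ≤ a := hx1
        linarith [hx2.1]
      rw [eA, eB, eC, Real.volume_Icc, Real.volume_Icc, measure_empty, mul_zero, add_zero]
      rw [← ENNReal.ofReal_mul (by norm_num), ← ENNReal.ofReal_mul (by norm_num),
        ← ENNReal.ofReal_mul (by norm_num),
        ← ENNReal.ofReal_add (by positivity) (by nlinarith)]
      congr 1; ring
    · have eA : min (a+1/2) 1 = 1 := min_eq_right (by linarith)
      have eB : Iic a ∩ Ico (0:ℝ) (1/2) = Ico 0 (1/2) := by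
        apply inter_eq_self_of_subset_right
        intro x hx
        have : x < 1/2 := hx.2
        exact le_trans this.le (by linarith)
      have eC : Iic a ∩ Icc (1/2:ℝ) 1 = Icc (1/2) a := by
        ext x
        simp only [mem_inter_iff, mem_Iic, mem_Icc]
        constructor
        · rintro ⟨h, h1, _⟩; exact ⟨h1, h⟩
        · rintro ⟨h1, h⟩; exact ⟨h, h1, by linarith⟩
      rw [eA, eB, eC, Real.volume_Icc, Real.volume_Icc, Real.volume_Ico]
      rw [← ENNReal.ofReal_mul (by norm_num), ← ENNReal.ofReal_mul (by norm_num),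
        ← ENNReal.ofReal_mul (by norm_num), ← ENNReal.ofReal_mul (by norm_num),
        ← ENNReal.ofReal_add (by positivity) (by norm_num),
        ← ENNReal.ofReal_add (by norm_num) (by nlinarith)]
      congr 1; ring
  · have e1 : phi 1 ⁻¹' Iic a ∩ Ico (0:ℝ) (1/2) = Iic a ∩ Ico (0:ℝ) (1/2) := by
      ext x
      simp only [mem_inter_iff, mem_preimage, mem_Iic, mem_Ico]
      constructor
      · rintro ⟨_, h⟩; exact ⟨by linarith [h.2], h⟩
      · rintro ⟨_, h⟩; exact ⟨le_trans (phi1_le_one h.1 (by linarith [h.2])) ha1, h⟩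
    have e2 : phi 1 ⁻¹' Iic a ∩ Icc (1/2:ℝ) 1 = Iic a ∩ Icc (1/2:ℝ) 1 := by
      ext x
      simp only [mem_inter_iff, mem_preimage, mem_Iic, mem_Icc]
      constructor
      · rintro ⟨_, h⟩; exact ⟨by linarith [h.2], h⟩
      · rintro ⟨_, h⟩
        exact ⟨le_trans (phi1_le_one (le_trans (by norm_num) h.1) h.2) ha1, h⟩
    rw [e1, e2]

/-- (Proposition 1) The measure with density `ρ¹(x) = 4/3` on `[0,1/2)`, `2/3` on `[1/2,1]`
is an invariant probability measure for `φ₁`. -/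
theorem stmt_1 : Measure.map (phi 1) mu1 = mu1 ∧ IsProbabilityMeasure mu1 := by
  have hp := mu1_prob
  refine ⟨?_, hp⟩
  haveI := hp
  haveI : IsProbabilityMeasure (Measure.map (phi 1) mu1) :=
    Measure.isProbabilityMeasure_map measurable_phi1.aemeasurable
  apply Measure.ext_of_Iic
  intro x
  rw [Measure.map_apply measurable_phi1 measurableSet_Iic]
  exact map_Iic x
end
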